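/- Let M be the structure monoid of a finite RC-quasigroup of size n and class p. Define, for u, u' ∈ ℕⁿ, u ≡_p u' iff the x-coordinates of u and u' are congruent mod p for every x ∈ X, and for g, g' ∈ M, g ≡ g' iff ν⁻¹(g) ≡_p ν⁻¹(g'). Then ≡ is an equivalence relation on M compatible with left- and right-multiplication, i.e., a congruence. -/

import Mathlib

/-- `PiAux op l y` is `Π_{r+1}(x₁, ..., x_r, y)` where `l = [x_r, ..., x₁]`. -/
def PiAux {X : Type*} (op : X → X → X) : List X → X → X
  | [], y => y
  | a :: l, y => op (PiAux op l a) (PiAux op l y)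

/-- `SigmaRev op l` is the list of letters of the word `Σ_r(x₁, ..., x_r)` for
`l = [x_r, ..., x₁]` the reversed argument list. -/
def SigmaRev {X : Type*} (op : X → X → X) : List X → List X
  | [] => []
  | a :: l => SigmaRev op l ++ [PiAux op l a]

/-- The defining relations `x(x ⊳ y) = y(y ⊳ x)` of the structure monoid of `(X, ⊳)`. -/
def structRels {X : Type*} (op : X → X → X) : FreeMonoid X → FreeMonoid X → Prop :=
  fun a b => ∃ x y : X,
    a = FreeMonoid.of x * FreeMonoid.of (op x y) ∧ b = FreeMonoid.of y * FreeMonoid.of (op y x)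

/-- in the structure monoid `M` of a finite RC-quasigroup of class `p`, the
relation `g ≡ g'` defined by `ν⁻¹(g) ≡_p ν⁻¹(g')` (all coordinates congruent mod `p`) is an
equivalence relation compatible with left- and right-multiplication, i.e. a congruence. -/
theorem stmt15 {X : Type*} [Fintype X] [DecidableEq X] (op : X → X → X)
    (hRC : ∀ x y z : X, op (op x y) (op x z) = op (op y x) (op y z))
    (hL : ∀ x : X, Function.Bijective (op x))
    (p : ℕ) (hp : 0 < p)
    (hclass : ∀ x y : X, PiAux op (List.replicate p x) y = y)
    (ν : (X → ℕ) → PresentedMonoid (structRels op))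
    (hν : Function.Bijective ν) (hone : ν 0 = 1)
    (π : (X → ℕ) → Equiv.Perm X)
    (hstep : ∀ (u : X → ℕ) (x : X),
      ν (u + Pi.single x 1) = ν u * PresentedMonoid.of (structRels op) (π u x))
    (hprod : ∀ u v : X → ℕ, ν (u + v) = ν u * ν (fun x => v ((π u).symm x)))
    (hperm : ∀ (u v : X → ℕ) (x : X),
      π (u + v) x = π (fun z => v ((π u).symm z)) (π u x)) :
    Equivalence (fun g g' : PresentedMonoid (structRels op) =>
      ∀ x : X, (Equiv.ofBijective ν hν).symm g x ≡ (Equiv.ofBijective ν hν).symm g' x [MOD p]) ∧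
    ∀ g g' h : PresentedMonoid (structRels op),
      (∀ x : X, (Equiv.ofBijective ν hν).symm g x
          ≡ (Equiv.ofBijective ν hν).symm g' x [MOD p]) →
      (∀ x : X, (Equiv.ofBijective ν hν).symm (h * g) x
          ≡ (Equiv.ofBijective ν hν).symm (h * g') x [MOD p]) ∧
      (∀ x : X, (Equiv.ofBijective ν hν).symm (g * h) x
          ≡ (Equiv.ofBijective ν hν).symm (g' * h) x [MOD p]) := by

  -- `π 0 = 1`
  have hπ0 : π 0 = 1 := by
    have h0 : (0 : X → ℕ) + 0 = 0 := by simp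
    ext x
    have h := hperm 0 0 x
    rw [h0] at h
    have h2 : (fun z => (0 : X → ℕ) ((π 0).symm z)) = (0 : X → ℕ) := rfl
    rw [h2] at h
    have := (π 0).injective h
    simpa using this.symm
  -- `ν` at a single generator
  have hν1 : ∀ x : X, ν (Pi.single x 1) = PresentedMonoid.of (structRels op) x := by
    intro x
    have h := hstep 0 x
    rw [hπ0] at h
    simpa [hone] using h
  -- the defining relation in the presented monoid
  have hrel : ∀ x y : X, PresentedMonoid.of (structRels op) x *
      PresentedMonoid.of (structRels op) (op x y) =
      PresentedMonoid.of (structRels op) y * PresentedMonoid.of (structRels op) (op y x) := by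
    intro x y
    show PresentedMonoid.mk (structRels op) (FreeMonoid.of x * FreeMonoid.of (op x y)) =
      PresentedMonoid.mk (structRels op) (FreeMonoid.of y * FreeMonoid.of (op y x))
    exact Con.eq _ |>.2 (ConGen.Rel.of _ _ ⟨x, y, rfl, rfl⟩)
  -- `ν` at a sum of two generators
  have hν2 : ∀ x y : X, ν (Pi.single x 1 + Pi.single y 1) =
      PresentedMonoid.of (structRels op) x *
        PresentedMonoid.of (structRels op) (π (Pi.single x 1) y) := by
    intro x y
    rw [hstep (Pi.single x 1) y, hν1]
  -- `π` at a single generator is `op x`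
  have hπ1 : ∀ x y : X, π (Pi.single x 1) y = op x y := by
    have key : ∀ x y : X, x ≠ y → π (Pi.single x 1) y = op x y := by
      intro x y hxy
      set a := (π (Pi.single x 1)).symm (op x y) with ha
      set b := (π (Pi.single y 1)).symm (op y x) with hb
      have h1 : ν (Pi.single x 1 + Pi.single a 1) = ν (Pi.single y 1 + Pi.single b 1) := by
        rw [hν2, hν2, ha, hb, Equiv.apply_symm_apply, Equiv.apply_symm_apply, hrel]
      have h2 := hν.injective h1
      have e := congrFun h2 y
      simp only [Pi.add_apply, Pi.single_apply] at e
      rw [if_neg (Ne.symm hxy)] at e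
      have hay : y = a := by
        by_contra hya
        rw [if_neg hya] at e
        split_ifs at e <;> omega
      have : π (Pi.single x 1) a = op x y := by rw [ha, Equiv.apply_symm_apply]
      rw [← hay] at this
      exact this
    intro x y
    by_cases hxy : x = y
    · subst hxy
      -- both `π (Pi.single x 1)` and `op x` are injective and agree off `x`
      by_contra h
      obtain ⟨x', hx'⟩ := (hL x).2 (π (Pi.single x 1) x)
      have hx'x : x' ≠ x := fun he => h (he ▸ hx').symm
      have : π (Pi.single x 1) x' = π (Pi.single x 1) x := by
        rw [key x x' (Ne.symm hx'x), hx']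
      exact hx'x ((π (Pi.single x 1)).injective this)
    · exact key x y hxy
  -- `π` of `n` copies of a generator
  have hrep : ∀ (n : ℕ) (x y : X), π (Pi.single x n) y = PiAux op (List.replicate n x) y := by
    intro n
    induction n with
    | zero => intro x y; simp [hπ0, PiAux]
    | succ n ih =>
      intro x y
      have hsplit : (Pi.single x (n + 1) : X → ℕ) = Pi.single x n + Pi.single x 1 := by
        rw [← Pi.single_add]
      rw [hsplit]
      have h := hperm (Pi.single x n) (Pi.single x 1) y
      have hfun : (fun z => (Pi.single x 1 : X → ℕ) ((π (Pi.single x n)).symm z)) =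
          Pi.single (π (Pi.single x n) x) 1 := by
        funext z
        rw [Pi.single_apply, Pi.single_apply]
        by_cases hz : (π (Pi.single x n)).symm z = x
        · rw [if_pos hz, if_pos ((Equiv.symm_apply_eq _).mp hz)]
        · rw [if_neg hz, if_neg (fun he => hz (by rw [he, Equiv.symm_apply_apply]))]
      rw [hfun] at h
      rw [h, hπ1, ih, ih, List.replicate_succ, PiAux]
  -- `π (Pi.single x p) = 1`
  have hπp : ∀ x : X, π (Pi.single x p) = 1 := by
    intro x
    ext y
    rw [hrep, hclass]
    rfl
  -- adding `p` at one coordinate does not change `π`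
  have hadd1 : ∀ (u : X → ℕ) (x : X), π (u + Pi.single x p) = π u := by
    intro u x
    ext y
    have h := hperm u (Pi.single x p) y
    have hfun : (fun z => (Pi.single x p : X → ℕ) ((π u).symm z)) =
        Pi.single (π u x) p := by
      funext z
      rw [Pi.single_apply, Pi.single_apply]
      by_cases hz : (π u).symm z = x
      · rw [if_pos hz, if_pos ((Equiv.symm_apply_eq _).mp hz)]
      · rw [if_neg hz, if_neg (fun he => hz (by rw [he, Equiv.symm_apply_apply]))]
    rw [hfun, hπp] at h
    simpa using h
  have haddm : ∀ (m : ℕ) (u : X → ℕ) (x : X), π (u + Pi.single x (p * m)) = π u := by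
    intro m
    induction m with
    | zero => intro u x; simp
    | succ m ih =>
      intro u x
      have : (Pi.single x (p * (m + 1)) : X → ℕ) = Pi.single x (p * m) + Pi.single x p := by
        rw [← Pi.single_add, Nat.mul_succ]
      rw [this, ← add_assoc, hadd1, ih]
  -- adding `p * k` does not change `π`
  have haddk : ∀ (k u : X → ℕ), π (u + fun x => p * k x) = π u := by
    have hF : ∀ s : Finset X, ∀ k u : X → ℕ, (∀ x ∉ s, k x = 0) →
        π (u + fun x => p * k x) = π u := by
      intro s
      induction s using Finset.induction with
      | empty =>
        intro k u hk
        have : (fun x => p * k x) = (0 : X → ℕ) := by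
          funext x; simp [hk x (Finset.notMem_empty x)]
        rw [this, add_zero]
      | @insert a s ha ih =>
        intro k u hk
        have hsplit : (fun x => p * k x) =
            (fun x => p * Function.update k a 0 x) + Pi.single a (p * k a) := by
          funext x
          by_cases hx : x = a
          · subst hx; simp
          · simp [Function.update_of_ne hx, Pi.single_apply, hx]
        rw [hsplit, ← add_assoc, haddm, ih]
        intro x hx
        by_cases hxa : x = a
        · subst hxa; simp
        · rw [Function.update_of_ne hxa]
          exact hk x (by simp [Finset.mem_insert, hxa, hx])
    intro k u
    exact hF Finset.univ k u (fun x hx => absurd (Finset.mem_univ x) hx)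
  -- the key lemma: `π` depends only on `u` mod `p`
  have hkey : ∀ u u' : X → ℕ, (∀ x, u x ≡ u' x [MOD p]) → π u = π u' := by
    have hm : ∀ u : X → ℕ, π u = π (fun x => u x % p) := by
      intro u
      have : u = (fun x => u x % p) + fun x => p * (u x / p) := by
        funext x
        simp [Nat.mod_add_div (u x) p]
      conv_lhs => rw [this]
      rw [haddk]
    intro u u' h
    rw [hm u, hm u']
    congr 1
    funext x
    exact h x
  -- multiplication formula on preimages
  set E := Equiv.ofBijective ν hν with hE
  have hEs : ∀ v : X → ℕ, E.symm (ν v) = v := fun v => E.symm_apply_apply v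
  have hmul : ∀ g h : PresentedMonoid (structRels op),
      E.symm (g * h) = E.symm g + fun x => E.symm h (π (E.symm g) x) := by
    intro g h
    have hg : ν (E.symm g) = g := E.apply_symm_apply g
    have hh : ν (E.symm h) = h := E.apply_symm_apply h
    have := hprod (E.symm g) (fun x => E.symm h (π (E.symm g) x))
    simp -failIfUnchanged only [Equiv.symm_apply_apply] at this
    rw [hg] at this
    have h2 : (fun x => E.symm h (π (E.symm g) ((π (E.symm g)).symm x))) = E.symm h := by
      funext x; rw [Equiv.apply_symm_apply]
    rw [h2, hh] at this
    rw [← this, hEs]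
  refine ⟨⟨fun g x => Nat.ModEq.refl _, fun h x => (h x).symm,
    fun h1 h2 x => (h1 x).trans (h2 x)⟩, ?_⟩
  intro g g' h hgg'
  constructor
  · intro x
    rw [hmul h g, hmul h g']
    exact Nat.ModEq.add_left _ (hgg' _)
  · intro x
    rw [hmul g h, hmul g' h]
    have hπeq : π (E.symm g) = π (E.symm g') := hkey _ _ hgg'
    have : (E.symm g + fun y => E.symm h (π (E.symm g) y)) x =
        E.symm g x + E.symm h (π (E.symm g) x) := rfl
    rw [this, hπeq]
    exact Nat.ModEq.add_right _ (hgg' x)
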